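/- Let C₀ > 0 and let φ : [0,∞) → ℝ satisfy φ(0) = 0 and |φ(s) − φ(t)| ≤ C₀·(1 + K²)·|s − t| for all K > 0 and all 0 ≤ s, t ≤ K. Define g : ℂ → ℂ by g(z) = (z/|z|)·φ(|z|) for z ≠ 0 and g(0) = 0, and for each positive integer m define g_m : ℂ → ℂ by g_m(z) = g(z) if |z| ≤ m and g_m(z) = (z/m)·φ(m) if |z| ≥ m. Then there exists a constant C > 0, depending only on C₀ and not on m, such that for all positive integers m and all complex numbers u and v, |g_m(u) − g_m(v)| ≤ C·(1 + |u|² + |v|²)·|u − v|. -/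

import Mathlib

-- unit vector estimate
lemma unit_est (u v : ℂ) (hu : u ≠ 0) (hv : v ≠ 0)
    (h : ‖v‖ ≤ ‖u‖) :
    ‖v‖ * ‖u / (‖u‖ : ℂ) - v / (‖v‖ : ℂ)‖
      ≤ 2 * ‖u - v‖ := by
  have ha : 0 < ‖u‖ := norm_pos_iff.mpr hu
  have hb : 0 < ‖v‖ := norm_pos_iff.mpr hv
  set a := ‖u‖ with ha'
  set b := ‖v‖ with hb'
  have key : u / (a : ℂ) - v / (b : ℂ) = (u * b - v * a) / ((a : ℂ) * b) := by
    have hA : (a:ℂ) ≠ 0 := by exact_mod_cast ha.ne'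
    have hB : (b:ℂ) ≠ 0 := by exact_mod_cast hb.ne'
    field_simp
  have h2 : |b - a| ≤ ‖u - v‖ := by
    rw [abs_sub_comm, abs_of_nonneg (sub_nonneg.2 h)]
    have := norm_sub_norm_le u v
    simpa using this
  have hnum : ‖u * b - v * a‖ ≤ 2 * b * ‖u - v‖ := by
    have h1 : u * (b:ℂ) - v * a = (b:ℂ) * (u - v) + ((b - a : ℝ) : ℂ) * v := by
      push_cast; ring
    calc ‖u * b - v * a‖
        ≤ ‖(b:ℂ) * (u - v)‖ + ‖((b - a : ℝ) : ℂ) * v‖ := by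
          rw [h1]; exact norm_add_le _ _
      _ = b * ‖u - v‖ + |b - a| * b := by
          rw [norm_mul, norm_mul, Complex.norm_real, Real.norm_eq_abs, Complex.norm_real, Real.norm_eq_abs, abs_of_pos hb,
            ← hb']
      _ ≤ b * ‖u - v‖ + ‖u - v‖ * b := by
          nlinarith [norm_nonneg (u - v), hb.le]
      _ = 2 * b * ‖u - v‖ := by ring
  calc b * ‖u / (a : ℂ) - v / (b : ℂ)‖
      = b * (‖u * b - v * a‖ / (a * b)) := by
        rw [key, norm_div, norm_mul, Complex.norm_real, Real.norm_eq_abs, Complex.norm_real, Real.norm_eq_abs,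
          abs_of_pos ha, abs_of_pos hb]
    _ ≤ b * ((2 * b * ‖u - v‖) / (a * b)) := by
        exact mul_le_mul_of_nonneg_left
          ((div_le_div_iff_of_pos_right (mul_pos ha hb)).2 hnum) hb.le
    _ = 2 * ‖u - v‖ * (b / a) := by field_simp
    _ ≤ 2 * ‖u - v‖ := by
        have : b / a ≤ 1 := (div_le_one ha).2 h
        nlinarith [norm_nonneg (u - v)]

lemma gLip (C₀ : ℝ) (hC₀ : 0 < C₀) (φ : ℝ → ℝ) (hφ0 : φ 0 = 0)
    (hφ : ∀ K : ℝ, 0 < K → ∀ s t : ℝ, 0 ≤ s → s ≤ K → 0 ≤ t → t ≤ K →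
      |φ s - φ t| ≤ C₀ * (1 + K ^ 2) * |s - t|)
    (g : ℂ → ℂ) (hg0 : g 0 = 0)
    (hg : ∀ z : ℂ, z ≠ 0 → g z = (z / (‖z‖ : ℂ)) * (φ (‖z‖) : ℂ))
    (K : ℝ) (hK : 0 < K) :
    ∀ u v : ℂ, ‖u‖ ≤ K → ‖v‖ ≤ K → ‖v‖ ≤ ‖u‖ →
      ‖g u - g v‖ ≤ 3 * C₀ * (1 + K ^ 2) * ‖u - v‖ := by
  intro u v hu hv hvu
  have hCK : 0 ≤ C₀ * (1 + K ^ 2) := by positivity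
  by_cases hv0 : v = 0
  · subst hv0
    rw [hg0, sub_zero, sub_zero]
    by_cases hu0 : u = 0
    · simp [hu0, hg0]
    · rw [hg u hu0, norm_mul, norm_div, Complex.norm_real, Real.norm_eq_abs,
        abs_of_nonneg (norm_nonneg u), div_self ((norm_ne_zero_iff.mpr hu0)), one_mul,
        Complex.norm_real, Real.norm_eq_abs]
      have := hφ K hK (‖u‖) 0 (norm_nonneg u) hu le_rfl hK.le
      rw [hφ0, sub_zero, sub_zero, abs_of_nonneg (norm_nonneg u)] at this
      nlinarith [norm_nonneg u, abs_nonneg (φ (‖u‖))]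
  · have hu0 : u ≠ 0 := by
      intro h; apply hv0
      rw [h] at hvu; simp at hvu
      exact norm_eq_zero.1 (le_antisymm (by simpa using hvu) (norm_nonneg v))
    have hau : 0 < ‖u‖ := norm_pos_iff.mpr hu0
    have hav : 0 < ‖v‖ := norm_pos_iff.mpr hv0
    have hdecomp : g u - g v =
        (u / (‖u‖ : ℂ)) * ((φ (‖u‖) - φ (‖v‖) : ℝ) : ℂ)
        + ((φ (‖v‖) : ℝ) : ℂ) *
          (u / (‖u‖ : ℂ) - v / (‖v‖ : ℂ)) := by
      rw [hg u hu0, hg v hv0]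
      push_cast
      ring
    have h1 : ‖(u / (‖u‖ : ℂ)) *
        ((φ (‖u‖) - φ (‖v‖) : ℝ) : ℂ)‖
        ≤ C₀ * (1 + K ^ 2) * ‖u - v‖ := by
      rw [norm_mul, norm_div, Complex.norm_real, Real.norm_eq_abs, abs_of_pos hau,
        div_self hau.ne', one_mul, Complex.norm_real, Real.norm_eq_abs]
      have hb := hφ K hK (‖u‖) (‖v‖) (norm_nonneg u) hu
        (norm_nonneg v) hv
      have h2 : |‖u‖ - ‖v‖| ≤ ‖u - v‖ := by
        have := abs_norm_sub_norm_le u v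
        simpa using this
      calc |φ (‖u‖) - φ (‖v‖)|
          ≤ C₀ * (1 + K ^ 2) * |‖u‖ - ‖v‖| := hb
        _ ≤ C₀ * (1 + K ^ 2) * ‖u - v‖ :=
            mul_le_mul_of_nonneg_left h2 hCK
    have hφv : |φ (‖v‖)| ≤ C₀ * (1 + K ^ 2) * ‖v‖ := by
      have := hφ K hK (‖v‖) 0 (norm_nonneg v) hv le_rfl hK.le
      rwa [hφ0, sub_zero, sub_zero, abs_of_nonneg (norm_nonneg v)] at this
    have h3 : ‖((φ (‖v‖) : ℝ) : ℂ) *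
        (u / (‖u‖ : ℂ) - v / (‖v‖ : ℂ))‖
        ≤ 2 * C₀ * (1 + K ^ 2) * ‖u - v‖ := by
      rw [norm_mul, Complex.norm_real, Real.norm_eq_abs]
      have hue := unit_est u v hu0 hv0 hvu
      calc |φ (‖v‖)| *
            ‖u / (‖u‖ : ℂ) - v / (‖v‖ : ℂ)‖
          ≤ (C₀ * (1 + K ^ 2) * ‖v‖) *
            ‖u / (‖u‖ : ℂ) - v / (‖v‖ : ℂ)‖ :=
            mul_le_mul_of_nonneg_right hφv (norm_nonneg _)
        _ = C₀ * (1 + K ^ 2) * (‖v‖ *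
            ‖u / (‖u‖ : ℂ) - v / (‖v‖ : ℂ)‖) := by ring
        _ ≤ C₀ * (1 + K ^ 2) * (2 * ‖u - v‖) :=
            mul_le_mul_of_nonneg_left hue hCK
        _ = 2 * C₀ * (1 + K ^ 2) * ‖u - v‖ := by ring
    calc ‖g u - g v‖ ≤ _ + _ := by rw [hdecomp]; exact norm_add_le _ _
      _ ≤ C₀ * (1 + K ^ 2) * ‖u - v‖ +
          2 * C₀ * (1 + K ^ 2) * ‖u - v‖ := add_le_add h1 h3
      _ = 3 * C₀ * (1 + K ^ 2) * ‖u - v‖ := by ring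

theorem truncated_nonlinearity_uniform_lipschitz (C₀ : ℝ) (hC₀ : 0 < C₀) (φ : ℝ → ℝ)
    (hφ0 : φ 0 = 0)
    (hφ : ∀ K : ℝ, 0 < K → ∀ s t : ℝ, 0 ≤ s → s ≤ K → 0 ≤ t → t ≤ K →
      |φ s - φ t| ≤ C₀ * (1 + K ^ 2) * |s - t|)
    (g : ℂ → ℂ) (hg0 : g 0 = 0)
    (hg : ∀ z : ℂ, z ≠ 0 → g z = (z / (‖z‖ : ℂ)) * (φ (‖z‖) : ℂ))
    (gm : ℕ → ℂ → ℂ)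
    (hgm1 : ∀ (m : ℕ) (z : ℂ), ‖z‖ ≤ (m : ℝ) → gm m z = g z)
    (hgm2 : ∀ (m : ℕ) (z : ℂ), (m : ℝ) ≤ ‖z‖ →
      gm m z = (z / (m : ℂ)) * (φ (m : ℝ) : ℂ)) :
    ∃ C : ℝ, 0 < C ∧ ∀ (m : ℕ), 0 < m → ∀ u v : ℂ,
      ‖gm m u - gm m v‖ ≤
        C * (1 + ‖u‖ ^ 2 + ‖v‖ ^ 2) * ‖u - v‖ := by
  refine ⟨7 * C₀, by positivity, ?_⟩
  intro m hm
  have hmpos : (0:ℝ) < (m:ℝ) := by exact_mod_cast hm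
  have hφm : |φ (m:ℝ)| ≤ C₀ * (1 + (m:ℝ) ^ 2) * (m:ℝ) := by
    have := hφ (m:ℝ) hmpos (m:ℝ) 0 hmpos.le le_rfl le_rfl hmpos.le
    rwa [hφ0, sub_zero, sub_zero, abs_of_pos hmpos] at this
  -- key claim under the assumption |v| ≤ |u|
  have key : ∀ u v : ℂ, ‖v‖ ≤ ‖u‖ →
      ‖gm m u - gm m v‖ ≤
        7 * C₀ * (1 + ‖u‖ ^ 2 + ‖v‖ ^ 2) * ‖u - v‖ := by
    intro u v hvu
    have hsq : (0:ℝ) ≤ ‖u‖ ^ 2 := by positivity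
    have hsq' : (0:ℝ) ≤ ‖v‖ ^ 2 := by positivity
    have habsuv : (0:ℝ) ≤ ‖u - v‖ := norm_nonneg _
    rcases le_total (‖u‖) (m:ℝ) with hum | hmu
    · -- both ≤ m
      have hvm : ‖v‖ ≤ (m:ℝ) := le_trans hvu hum
      rw [hgm1 m u hum, hgm1 m v hvm]
      by_cases huv : u = v
      · simp [huv]
      · have hau : 0 < ‖u‖ := by
          rcases lt_or_eq_of_le (norm_nonneg u) with h | h
          · exact h
          · exfalso; apply huv
            have hu0 : u = 0 := norm_eq_zero.1 h.symm
            have hv0 : v = 0 := norm_eq_zero.1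
              (le_antisymm (by rw [hu0] at hvu; simpa using hvu) (norm_nonneg v))
            rw [hu0, hv0]
        have := gLip C₀ hC₀ φ hφ0 hφ g hg0 hg (‖u‖) hau u v le_rfl hvu hvu
        calc ‖g u - g v‖
            ≤ 3 * C₀ * (1 + ‖u‖ ^ 2) * ‖u - v‖ := this
          _ ≤ 7 * C₀ * (1 + ‖u‖ ^ 2 + ‖v‖ ^ 2) * ‖u - v‖ := by
              nlinarith [mul_nonneg hC₀.le habsuv,
                mul_nonneg (mul_nonneg hC₀.le hsq) habsuv,
                mul_nonneg (mul_nonneg hC₀.le hsq') habsuv]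
    · rcases le_total (‖v‖) (m:ℝ) with hvm | hmv
      · -- mixed case : |v| ≤ m ≤ |u|
        have hau : 0 < ‖u‖ := lt_of_lt_of_le hmpos hmu
        set w : ℂ := (((m:ℝ) / ‖u‖ : ℝ) : ℂ) * u with hw
        have habsw : ‖w‖ = (m:ℝ) := by
          rw [hw, norm_mul, Complex.norm_real, Real.norm_eq_abs, abs_of_pos (by positivity : (0:ℝ) < (m:ℝ)/‖u‖)]
          field_simp
        have hw0 : w ≠ 0 := by
          intro h; rw [h] at habsw; simp at habsw; exact hmpos.ne' habsw.symm
        have hAU : ((‖u‖ : ℝ) : ℂ) ≠ 0 := by exact_mod_cast hau.ne'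
        have habsm : ‖((m:ℕ):ℂ)‖ = (m:ℝ) := by simp
        have humw : u - w = (((‖u‖ - (m:ℝ)) / ‖u‖ : ℝ) : ℂ) * u := by
          rw [hw]; push_cast; field_simp
        have habsumw : ‖u - w‖ = ‖u‖ - (m:ℝ) := by
          rw [humw, norm_mul, Complex.norm_real, Real.norm_eq_abs,
            abs_of_nonneg (div_nonneg (sub_nonneg.2 hmu) hau.le)]
          field_simp
        have haum : ‖u‖ - (m:ℝ) ≤ ‖u - v‖ := by
          have h2 : ‖u‖ - ‖v‖ ≤ ‖u - v‖ := by
            have := norm_sub_norm_le u v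
            simpa using this
          linarith
        have hm2 : (m:ℝ)^2 ≤ ‖u‖ ^ 2 := by nlinarith
        have hgw : g w = w / ((m:ℕ):ℂ) * (φ ((m:ℕ):ℝ) : ℂ) := by
          rw [hg w hw0, habsw]; norm_cast
        have step1 : ‖gm m u - gm m w‖
            ≤ C₀ * (1 + ‖u‖ ^ 2) * ‖u - v‖ := by
          rw [hgm2 m u hmu, hgm1 m w habsw.le, hgw]
          have hM : ((m:ℕ):ℂ) ≠ 0 := by exact_mod_cast hm.ne'
          have hd : u / ((m:ℕ):ℂ) * (φ ((m:ℕ):ℝ) : ℂ) - w / ((m:ℕ):ℂ) * (φ ((m:ℕ):ℝ) : ℂ)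
              = ((u - w) / ((m:ℕ):ℂ)) * (φ ((m:ℕ):ℝ) : ℂ) := by ring
          rw [hd, norm_mul, norm_div, habsm, Complex.norm_real, Real.norm_eq_abs, habsumw]
          calc (‖u‖ - (m:ℝ)) / (m:ℝ) * |φ ((m:ℕ):ℝ)|
              ≤ (‖u‖ - (m:ℝ)) / (m:ℝ) * (C₀ * (1 + (m:ℝ)^2) * (m:ℝ)) :=
                mul_le_mul_of_nonneg_left hφm (div_nonneg (sub_nonneg.2 hmu) hmpos.le)
            _ = C₀ * (1 + (m:ℝ)^2) * (‖u‖ - (m:ℝ)) := by field_simp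
            _ ≤ C₀ * (1 + ‖u‖ ^ 2) * (‖u‖ - (m:ℝ)) := by
                nlinarith [mul_nonneg (mul_nonneg hC₀.le (sub_nonneg.2 hmu))
                  (sub_nonneg.2 hm2)]
            _ ≤ C₀ * (1 + ‖u‖ ^ 2) * ‖u - v‖ :=
                mul_le_mul_of_nonneg_left haum (by positivity)
        have hwv : ‖w - v‖ ≤ 2 * ‖u - v‖ := by
          have ht : ‖w - v‖ ≤ ‖w - u‖ + ‖u - v‖ :=
            norm_sub_le_norm_sub_add_norm_sub w u v
          have : ‖w - u‖ = ‖u‖ - (m:ℝ) := by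
            rw [norm_sub_rev, habsumw]
          linarith
        have step2 : ‖gm m w - gm m v‖
            ≤ 6 * C₀ * (1 + ‖u‖ ^ 2) * ‖u - v‖ := by
          rw [hgm1 m w habsw.le, hgm1 m v hvm]
          have hG := gLip C₀ hC₀ φ hφ0 hφ g hg0 hg (‖u‖) hau w v
            (by rw [habsw]; exact hmu) (le_trans hvm hmu) (by rw [habsw]; exact hvm)
          calc ‖g w - g v‖
              ≤ 3 * C₀ * (1 + ‖u‖ ^ 2) * ‖w - v‖ := hG
            _ ≤ 3 * C₀ * (1 + ‖u‖ ^ 2) * (2 * ‖u - v‖) :=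
                mul_le_mul_of_nonneg_left hwv (by positivity)
            _ = 6 * C₀ * (1 + ‖u‖ ^ 2) * ‖u - v‖ := by ring
        calc ‖gm m u - gm m v‖
            ≤ ‖gm m u - gm m w‖ + ‖gm m w - gm m v‖ :=
              norm_sub_le_norm_sub_add_norm_sub (gm m u) (gm m w) (gm m v)
          _ ≤ C₀ * (1 + ‖u‖ ^ 2) * ‖u - v‖
              + 6 * C₀ * (1 + ‖u‖ ^ 2) * ‖u - v‖ := add_le_add step1 step2
          _ ≤ 7 * C₀ * (1 + ‖u‖ ^ 2 + ‖v‖ ^ 2) * ‖u - v‖ := by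
              nlinarith [mul_nonneg (mul_nonneg hC₀.le hsq') habsuv]
      · -- both ≥ m
        have hum : (m:ℝ) ≤ ‖u‖ := le_trans hmv hvu
        rw [hgm2 m u hum, hgm2 m v hmv]
        have hdiff : u / (m:ℂ) * (φ (m:ℝ) : ℂ) - v / (m:ℂ) * (φ (m:ℝ) : ℂ)
            = ((u - v) / (m:ℂ)) * (φ (m:ℝ) : ℂ) := by ring
        rw [hdiff, norm_mul, norm_div, Complex.norm_real, Real.norm_eq_abs]
        have habsm : ‖((m:ℕ):ℂ)‖ = (m:ℝ) := by
          simp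
        rw [habsm]
        calc ‖u - v‖ / (m:ℝ) * |φ (m:ℝ)|
            ≤ ‖u - v‖ / (m:ℝ) * (C₀ * (1 + (m:ℝ)^2) * (m:ℝ)) :=
              mul_le_mul_of_nonneg_left hφm (by positivity)
          _ = C₀ * (1 + (m:ℝ)^2) * ‖u - v‖ := by field_simp
          _ ≤ 7 * C₀ * (1 + ‖u‖ ^ 2 + ‖v‖ ^ 2) * ‖u - v‖ := by
              have h1 : (m:ℝ)^2 ≤ ‖v‖ ^ 2 := by nlinarith
              nlinarith [mul_nonneg hC₀.le habsuv,
                mul_nonneg (mul_nonneg hC₀.le hsq) habsuv,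
                mul_nonneg (mul_nonneg hC₀.le hsq') habsuv,
                mul_nonneg (mul_nonneg hC₀.le (sub_nonneg.2 h1)) habsuv]
  intro u v
  rcases le_total (‖v‖) (‖u‖) with h | h
  · exact key u v h
  · have := key v u h
    rw [norm_sub_rev (gm m v), norm_sub_rev v] at this  -- may need fixing
    calc ‖gm m u - gm m v‖ ≤
        7 * C₀ * (1 + ‖v‖ ^ 2 + ‖u‖ ^ 2) * ‖u - v‖ := this
      _ = 7 * C₀ * (1 + ‖u‖ ^ 2 + ‖v‖ ^ 2) * ‖u - v‖ := by ring
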